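/- For γ ∈ ℝ, γ̃ ∈ ℝ and r > 1, the ratio K'_{γ̃}(r)/K'_γ(r) satisfies |K'_{γ̃}(r)/K'_γ(r) - 1| ≤ sup_{s∈[1,r]} |s^{γ̃-γ} - 1|, where K'_z(r) = ∫₁ʳ s^{z-1} log(s) ds. -/

import Mathlib

open Real Set intervalIntegral

/-- `K'_z(r) = ∫₁ʳ s^{z-1} log s ds`. -/
noncomputable def Kfun' (z u : ℝ) : ℝ := ∫ v in (1:ℝ)..u, v ^ (z - 1) * Real.log v

lemma Kfun'_integrable (z r : ℝ) (hr : 1 < r) :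
    IntervalIntegrable (fun v : ℝ => v ^ (z - 1) * Real.log v) MeasureTheory.volume 1 r := by
  apply ContinuousOn.intervalIntegrable
  apply ContinuousOn.mul
  · exact fun x hx => (Real.continuousAt_rpow_const x _ (Or.inl (by
      rw [uIcc_of_le hr.le] at hx; linarith [hx.1]))).continuousWithinAt
  · exact fun x hx => (Real.continuousAt_log (by
      rw [uIcc_of_le hr.le] at hx; linarith [hx.1])).continuousWithinAt

lemma Kfun'_pos (z r : ℝ) (hr : 1 < r) : 0 < Kfun' z r := by
  apply intervalIntegral.intervalIntegral_pos_of_pos_on (Kfun'_integrable z r hr) _ hr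
  intro x hx
  exact mul_pos (Real.rpow_pos_of_pos (by linarith [hx.1]) _) (Real.log_pos hx.1)

/-- The ratio `K'_{γ̃}(r)/K'_γ(r)` is close to 1 when `s^{γ̃-γ}` is uniformly close
to 1 on `[1, r]`. -/
theorem Kfun'_ratio_bound (γ γtilde r : ℝ) (hr : 1 < r) (M : ℝ)
    (hM : ∀ s ∈ Icc (1:ℝ) r, |s ^ (γtilde - γ) - 1| ≤ M) :
    |Kfun' γtilde r / Kfun' γ r - 1| ≤ M := by
  have hpos := Kfun'_pos γ r hr
  have hI1 := Kfun'_integrable γtilde r hr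
  have hI2 := Kfun'_integrable γ r hr
  have key : |Kfun' γtilde r - Kfun' γ r| ≤ M * Kfun' γ r := by
    have hdiff : Kfun' γtilde r - Kfun' γ r
        = ∫ v in (1:ℝ)..r, (v ^ (γtilde - γ) - 1) * (v ^ (γ - 1) * Real.log v) := by
      rw [Kfun', Kfun', ← intervalIntegral.integral_sub hI1 hI2]
      apply intervalIntegral.integral_congr
      intro x hx
      rw [uIcc_of_le hr.le] at hx
      have hx0 : (0:ℝ) < x := by linarith [hx.1]
      have : x ^ (γtilde - 1) = x ^ (γtilde - γ) * x ^ (γ - 1) := by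
        rw [← Real.rpow_add hx0]; ring_nf
      simp only []; rw [this]; ring
    rw [hdiff]
    have habs : |∫ v in (1:ℝ)..r, (v ^ (γtilde - γ) - 1) * (v ^ (γ - 1) * Real.log v)|
        ≤ ∫ v in (1:ℝ)..r, |(v ^ (γtilde - γ) - 1) * (v ^ (γ - 1) * Real.log v)| :=
      intervalIntegral.abs_integral_le_integral_abs hr.le
    refine habs.trans ?_
    have hIg : IntervalIntegrable
        (fun v : ℝ => (v ^ (γtilde - γ) - 1) * (v ^ (γ - 1) * Real.log v))
        MeasureTheory.volume 1 r := by
      have := (Kfun'_integrable γtilde r hr).sub hI2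
      apply this.congr_ae
      rw [Filter.EventuallyEq, MeasureTheory.ae_restrict_iff' measurableSet_uIoc]
      filter_upwards with x hx
      rw [uIoc_of_le hr.le] at hx
      have hx0 : (0:ℝ) < x := by linarith [hx.1]
      have : x ^ (γtilde - 1) = x ^ (γtilde - γ) * x ^ (γ - 1) := by
        rw [← Real.rpow_add hx0]; ring_nf
      rw [this]; ring
    have : Kfun' γ r = ∫ v in (1:ℝ)..r, v ^ (γ - 1) * Real.log v := rfl
    rw [this, ← intervalIntegral.integral_const_mul]
    apply intervalIntegral.integral_mono_on hr.le hIg.abs (hI2.const_mul M)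
    intro x hx
    have hx0 : (0:ℝ) < x := by linarith [hx.1]
    have hnn : 0 ≤ x ^ (γ - 1) * Real.log x :=
      mul_nonneg (Real.rpow_pos_of_pos hx0 _).le (Real.log_nonneg hx.1)
    rw [abs_mul, abs_of_nonneg hnn]
    exact mul_le_mul_of_nonneg_right (hM x hx) hnn
  have h1 : Kfun' γtilde r / Kfun' γ r - 1 = (Kfun' γtilde r - Kfun' γ r) / Kfun' γ r := by
    field_simp
  rw [h1, abs_div, abs_of_pos hpos, div_le_iff₀ hpos]
  exact key
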